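/- Under the same hypotheses, H₁ = H₀ + AᵀH₀(I+G₀H₀)⁻¹A equals D^H_1 + L^H_1 K^H_1 (L^H_1)ᵀ where D^H_1 = D^H_0 + D^{AᵀHGH}_0 D^A_0, L^H_1 = [L^A_{20}, D^{AᵀHGH}_0 L^A_{10}], K^H_1 = [[(L^A_{10})ᵀ D^{HGH}_0 L^A_{10}, I],[I,0]], with D^{AᵀHGH}_0 = (D^A_0)ᵀ(I+D^H_0D^G_0)⁻¹D^H_0 and D^{HGH}_0 = (I+D^H_0D^G_0)⁻¹D^H_0. -/

import Mathlib

open Matrix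

/-- The `k = 1` FSDA factored form of `H₁`. -/
theorem fsda_H1 {N m : ℕ} (DA DG DH : Matrix (Fin N) (Fin N) ℝ)
    (L10 L20 : Matrix (Fin N) (Fin m) ℝ)
    (hDG : DG.IsSymm) (hDH : DH.IsSymm)
    (hinv : IsUnit (1 + DG * DH).det) :
    DH + (DA + L10 * L20ᵀ)ᵀ * DH * (1 + DG * DH)⁻¹ * (DA + L10 * L20ᵀ) =
      (DH + (DAᵀ * ((1 + DH * DG)⁻¹ * DH)) * DA) +
        fromCols L20 ((DAᵀ * ((1 + DH * DG)⁻¹ * DH)) * L10) *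
          (fromBlocks (L10ᵀ * ((1 + DH * DG)⁻¹ * DH) * L10) 1 1 0 :
            Matrix (Fin m ⊕ Fin m) (Fin m ⊕ Fin m) ℝ) *
          (fromCols L20 ((DAᵀ * ((1 + DH * DG)⁻¹ * DH)) * L10))ᵀ := by
  have hinv2 : IsUnit (1 + DH * DG).det := by
    rwa [Matrix.det_one_add_mul_comm]
  -- swap identity
  have key : DH * (1 + DG * DH)⁻¹ = (1 + DH * DG)⁻¹ * DH := by
    have h1 : (1 + DH * DG) * (DH * (1 + DG * DH)⁻¹) = DH := by
      have : (1 + DH * DG) * DH = DH * (1 + DG * DH) := by noncomm_ring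
      rw [← Matrix.mul_assoc, this, Matrix.mul_assoc,
        Matrix.mul_nonsing_inv _ hinv, Matrix.mul_one]
    calc DH * (1 + DG * DH)⁻¹
        = (1 + DH * DG)⁻¹ * ((1 + DH * DG) * (DH * (1 + DG * DH)⁻¹)) := by
          rw [← Matrix.mul_assoc, Matrix.nonsing_inv_mul _ hinv2, Matrix.one_mul]
      _ = (1 + DH * DG)⁻¹ * DH := by rw [h1]
  set S := (1 + DH * DG)⁻¹ * DH with hS
  have hSsymm : Sᵀ = S := by
    have : (1 + DH * DG)ᵀ = 1 + DG * DH := by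
      simp [transpose_add, transpose_mul, hDG.eq, hDH.eq]
    rw [hS, transpose_mul, transpose_nonsing_inv, this, hDH.eq, key]
  have hL : (DA + L10 * L20ᵀ)ᵀ * DH * (1 + DG * DH)⁻¹ * (DA + L10 * L20ᵀ)
      = (DA + L10 * L20ᵀ)ᵀ * S * (DA + L10 * L20ᵀ) := by
    rw [Matrix.mul_assoc _ DH, key]
  rw [hL]
  rw [transpose_fromCols, fromCols_mul_fromBlocks, fromCols_mul_fromRows]
  rw [transpose_mul, transpose_mul, transpose_transpose, hSsymm]
  simp only [transpose_add, transpose_mul, transpose_transpose, Matrix.one_mul,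
    Matrix.mul_one]
  simp only [Matrix.mul_zero, Matrix.add_mul, Matrix.mul_add, Matrix.add_mul, add_zero, Matrix.mul_assoc]
  abel
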